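/- For the five-state example MDP under the Huber attack with attack signal C = ((2−ε)d + κ)/ε, the optimal action at state 1 is flipped: any fixed point Q* of the clean Bellman operator satisfies Q*(1,L) > Q*(1,R), while any fixed point Q̃*_c of the perturbed Bellman operator satisfies Q̃*_c(1,R) > Q̃*_c(1,L). -/

import Mathlib

open Finset

/-- The two actions `L` and `R`. -/
inductive Act : Type
  | L : Act
  | R : Act
  deriving DecidableEq

instance : Fintype Act := ⟨{Act.L, Act.R}, fun x => by cases x <;> simp⟩

instance : Nonempty Act := ⟨Act.L⟩

/-- Transition kernel of the five-state example MDP; state `i+1` of the paper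
is encoded as `(i : Fin 5)`.  From state 1, action `L` leads to state 2 w.p. `p`
and to state 5 w.p. `1-p`; action `R` leads to state 3 w.p. `p` and to
state 4 w.p. `1-p`.  State 2 stays w.p. `p` and moves to state 5 w.p. `1-p`;
state 3 stays w.p. `p` and moves to state 4 w.p. `1-p`; states 4 and 5 are
absorbing. -/
def P5 (p : ℝ) : Fin 5 → Act → Fin 5 → ℝ := fun s a s' =>
  if s = 0 then
    (match a with
      | Act.L => if s' = 1 then p else if s' = 4 then 1 - p else 0
      | Act.R => if s' = 2 then p else if s' = 3 then 1 - p else 0)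
  else if s = 1 then (if s' = 1 then p else if s' = 4 then 1 - p else 0)
  else if s = 2 then (if s' = 2 then p else if s' = 3 then 1 - p else 0)
  else if s = 3 then (if s' = 3 then 1 else 0)
  else (if s' = 4 then 1 else 0)

/-- Clean expected rewards of the five-state example MDP: `R(1,L)=d`,
`R(1,R)=-d`, reward `1` in states 2 and 3, reward `0` in states 4 and 5. -/
def R5 (d : ℝ) : Fin 5 → Act → ℝ := fun s a =>
  if s = 0 then (match a with | Act.L => d | Act.R => -d)
  else if s = 1 ∨ s = 2 then 1
  else 0

/-- Bellman optimality operator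
`(T*Q)(s,a) = R(s,a) + γ Σ_{s'} P(s'|s,a) max_{a'} Q(s',a')`. -/
noncomputable def bellman (P : Fin 5 → Act → Fin 5 → ℝ) (R : Fin 5 → Act → ℝ) (γ : ℝ)
    (Q : Fin 5 → Act → ℝ) : Fin 5 → Act → ℝ :=
  fun s a =>
    R s a + γ * ∑ s', P s a s' * Finset.univ.sup' Finset.univ_nonempty (fun a' => Q s' a')

/-- Perturbed expected rewards under the Huber attack with corruption fraction
`ε` and attack signal `C`: `R̃(1,L) = (1-ε)d - εC`, `R̃(1,R) = -(1-ε)d + εC`,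
and `R̃(s,a) = R(s,a)` for `s ≠ 1`. -/
def R5c (d ε C : ℝ) : Fin 5 → Act → ℝ := fun s a =>
  if s = 0 then (match a with
    | Act.L => (1 - ε) * d - ε * C
    | Act.R => -((1 - ε) * d) + ε * C)
  else R5 d s a

lemma supAct (f : Act → ℝ) :
    Finset.univ.sup' Finset.univ_nonempty f = max (f Act.L) (f Act.R) := by
  apply le_antisymm
  · exact Finset.sup'_le _ _ (fun a _ => by cases a <;> simp)
  · exact max_le (Finset.le_sup' f (Finset.mem_univ _)) (Finset.le_sup' f (Finset.mem_univ _))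

lemma key (γ p : ℝ) (hγ0 : 0 < γ) (hγ1 : γ < 1) (hp0 : 0 ≤ p) (hp1 : p ≤ 1)
    (Rf : Fin 5 → Act → ℝ)
    (h1 : ∀ a, Rf 1 a = 1) (h2 : ∀ a, Rf 2 a = 1)
    (h3 : ∀ a, Rf 3 a = 0) (h4 : ∀ a, Rf 4 a = 0)
    (Q : Fin 5 → Act → ℝ) (hQ : bellman (P5 p) Rf γ Q = Q) :
    Q 0 Act.L - Q 0 Act.R = Rf 0 Act.L - Rf 0 Act.R := by
  have e : ∀ s a, bellman (P5 p) Rf γ Q s a = Q s a := fun s a => congrFun (congrFun hQ s) a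
  have e3L := e 3 Act.L
  have e3R := e 3 Act.R
  have e4L := e 4 Act.L
  have e4R := e 4 Act.R
  have e1L := e 1 Act.L
  have e1R := e 1 Act.R
  have e2L := e 2 Act.L
  have e2R := e 2 Act.R
  have e0L := e 0 Act.L
  have e0R := e 0 Act.R
  simp only [bellman, P5, Fin.sum_univ_five, supAct, h1, h2, h3, h4] at e3L e3R e4L e4R e1L e1R e2L e2R e0L e0R
  simp only [Fin.reduceEq, if_true, if_false, reduceIte] at e3L e3R e4L e4R e1L e1R e2L e2R e0L e0R
  simp only [zero_mul, one_mul, zero_add, add_zero] at e3L e3R e4L e4R e1L e1R e2L e2R e0L e0R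
  have hγp : γ * p < 1 := lt_of_le_of_lt (by nlinarith) hγ1
  -- state 3 value is zero
  have h3LR : Q 3 Act.L = Q 3 Act.R := e3L.symm.trans e3R
  have hv3 : Q 3 Act.L ⊔ Q 3 Act.R = 0 := by
    rw [← h3LR, max_self] at e3L ⊢
    have h0 : (1 - γ) * Q 3 Act.L = 0 := by linarith
    rcases mul_eq_zero.mp h0 with h | h
    · linarith
    · exact h
  have h4LR : Q 4 Act.L = Q 4 Act.R := e4L.symm.trans e4R
  have hv4 : Q 4 Act.L ⊔ Q 4 Act.R = 0 := by
    rw [← h4LR, max_self] at e4L ⊢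
    have h0 : (1 - γ) * Q 4 Act.L = 0 := by linarith
    rcases mul_eq_zero.mp h0 with h | h
    · linarith
    · exact h
  simp only [hv3, hv4] at e1L e1R e2L e2R e0L e0R
  simp only [mul_zero, add_zero] at e1L e1R e2L e2R e0L e0R
  -- values of states 1 and 2 agree
  have h1LR : Q 1 Act.L = Q 1 Act.R := e1L.symm.trans e1R
  have h2LR : Q 2 Act.L = Q 2 Act.R := e2L.symm.trans e2R
  rw [← h1LR, max_self] at e1L e0L
  rw [← h2LR, max_self] at e2L e0R
  have hv12 : Q 1 Act.L = Q 2 Act.L := by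
    have h0 : (1 - γ * p) * (Q 1 Act.L - Q 2 Act.L) = 0 := by nlinarith [e1L, e2L]
    rcases mul_eq_zero.mp h0 with h | h
    · linarith
    · linarith
  rw [hv12] at e0L
  linarith


/-- For the five-state example MDP under the Huber attack with attack signal
`C = ((2-ε)d + κ)/ε`, the optimal action at state 1 is flipped: any fixed
point `Q*` of the clean Bellman operator satisfies `Q*(1,L) > Q*(1,R)`, while
any fixed point `Q̃*_c` of the perturbed operator satisfies
`Q̃*_c(1,R) > Q̃*_c(1,L)`. -/
theorem example_mdp_action_flip (γ p d ε κ : ℝ)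
    (hγ : γ ∈ Set.Ioo (0 : ℝ) 1) (hp : p ∈ Set.Icc (0 : ℝ) 1) (hd : 0 < d)
    (hε : ε ∈ Set.Ioo (0 : ℝ) 1) (hκ : 0 < κ)
    (Qstar Qc : Fin 5 → Act → ℝ)
    (hQ : bellman (P5 p) (R5 d) γ Qstar = Qstar)
    (hQc : bellman (P5 p) (R5c d ε (((2 - ε) * d + κ) / ε)) γ Qc = Qc) :
    Qstar 0 Act.L > Qstar 0 Act.R ∧ Qc 0 Act.R > Qc 0 Act.L := by
  obtain ⟨hγ0, hγ1⟩ := hγ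
  obtain ⟨hp0, hp1⟩ := hp
  obtain ⟨hε0, hε1⟩ := hε
  have hR : ∀ i ∈ ({1, 2, 3, 4} : Finset (Fin 5)), True := fun _ _ => trivial
  have k1 := key γ p hγ0 hγ1 hp0 hp1 (R5 d)
    (fun a => by simp [R5]) (fun a => by simp [R5]) (fun a => by simp [R5])
    (fun a => by simp [R5]) Qstar hQ
  have k2 := key γ p hγ0 hγ1 hp0 hp1 (R5c d ε (((2 - ε) * d + κ) / ε))
    (fun a => by simp [R5c, R5]) (fun a => by simp [R5c, R5]) (fun a => by simp [R5c, R5])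
    (fun a => by simp [R5c, R5]) Qc hQc
  have hCε : ε * (((2 - ε) * d + κ) / ε) = (2 - ε) * d + κ :=
    mul_div_cancel₀ _ (ne_of_gt hε0)
  constructor
  · have : R5 d 0 Act.L - R5 d 0 Act.R = 2 * d := by simp [R5]; ring
    rw [this] at k1
    linarith
  · have : R5c d ε (((2 - ε) * d + κ) / ε) 0 Act.L - R5c d ε (((2 - ε) * d + κ) / ε) 0 Act.R
        = -(2 * d) - 2 * κ := by
      simp only [R5c, if_pos rfl, if_true]
      rw [show ((1 - ε) * d - ε * (((2 - ε) * d + κ) / ε)) - (-((1 - ε) * d) + ε * (((2 - ε) * d + κ) / ε)) = 2 * ((1 - ε) * d) - 2 * (ε * (((2 - ε) * d + κ) / ε)) by ring, hCε]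
      ring
    rw [this] at k2
    linarith
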